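/- Gradient estimate for the discrete reaction–diffusion system: let u : [0,∞) → [0,1]^{T_N^d} be a solution of ∂_t u(t,i) = 2αN² (Δu(t,·))_i + β(1 − 2u(t,i)) + G(i, u(t,·)), and suppose there exists C_0 > 0 such that max_{i ∈ T_N^d} max_{1≤k≤d} |u(0, i+e_k) − u(0, i)| ≤ C_0/N, where e_1,…,e_d is the canonical basis. Then there exists a constant C > 0, independent of N and t, such that max_{i ∈ T_N^d} max_{1≤k≤d} |u(t, i+e_k) − u(t, i)| ≤ (C_0 + C√t)/N for all t ≥ 0. -/

import Mathlib

open scoped BigOperators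
open Finset

noncomputable section

/-- Sites of the discrete torus `T_N^d = (Z/NZ)^d`. -/
abbrev Site (d N : ℕ) := Fin d → ZMod N

/-- Configurations `{0,1}^{T_N^d}`. -/
abbrev Conf (d N : ℕ) := Site d N → Bool

/-- The unit vector `e_k` of the discrete torus. -/
def unitVec (d N : ℕ) (k : Fin d) : Site d N := fun l => if l = k then 1 else 0

/-- The local mean field `ρ_i(η) = K_N⁻¹ Σ_{j ∈ V} η_{i+j}`. -/
def rho (d N : ℕ) (V : Finset (Site d N)) (η : Conf d N) (i : Site d N) : ℝ :=
  (∑ j ∈ V, if η (i + j) then (1 : ℝ) else 0) / (V.card : ℝ)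

/-- `κ_N = min(⌊K_N T⌋ - 1, ⌊K_N (1-T)⌋)`. -/
def kappaN (K : ℕ) (T : ℝ) : ℤ := min (⌊(K : ℝ) * T⌋ - 1) ⌊(K : ℝ) * (1 - T)⌋

/-- Probability of an event `A` under the product Bernoulli measure `υ_u = ⊗_i B(u_i)`. -/
def bprob (d N : ℕ) (u : Site d N → ℝ) (A : Set (Conf d N)) : ℝ :=
  if h : N = 0 then 0 else by
    haveI : NeZero N := ⟨h⟩
    exact ∑ η : Conf d N,
      (∏ i : Site d N, if η i then u i else 1 - u i) * A.indicator (fun _ => (1 : ℝ)) η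

/-- `c_0^+(u) = P_{υ_u}[ρ_0(η) ≥ 1 - κ_N/K_N]`. -/
def cplus (d N : ℕ) (V : Finset (Site d N)) (T : ℝ) (u : Site d N → ℝ) : ℝ :=
  bprob d N u {η | rho d N V η 0 ≥ 1 - (kappaN V.card T : ℝ) / (V.card : ℝ)}

/-- `c_0^-(u) = P_{υ_u}[ρ_0(η) ≤ κ_N/K_N]`. -/
def cminus (d N : ℕ) (V : Finset (Site d N)) (T : ℝ) (u : Site d N → ℝ) : ℝ :=
  bprob d N u {η | rho d N V η 0 ≤ (kappaN V.card T : ℝ) / (V.card : ℝ)}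

/-- The reaction term `G(u) = (1-u_0) c_0^+(u) - u_0 c_0^-(u)`. -/
def Gfun (d N : ℕ) (V : Finset (Site d N)) (T : ℝ) (u : Site d N → ℝ) : ℝ :=
  (1 - u 0) * cplus d N V T u - u 0 * cminus d N V T u

/-- `G(i,u) = G(τ_i u)`. -/
def Gi (d N : ℕ) (V : Finset (Site d N)) (T : ℝ) (i : Site d N) (u : Site d N → ℝ) : ℝ :=
  Gfun d N V T (fun j => u (i + j))

/-- The discrete Laplacian `(Δu)_i = Σ_{j : |i-j|=1} (u_j - u_i)`. -/
def discLap (d N : ℕ) (u : Site d N → ℝ) (i : Site d N) : ℝ :=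
  ∑ k : Fin d, ((u (i + unitVec d N k) - u i) + (u (i - unitVec d N k) - u i))


/-- the squared-gradient field -/
def sqGrad (d N : ℕ) (v : Site d N → ℝ) (i : Site d N) : ℝ :=
  ∑ k : Fin d, ((v (i + unitVec d N k) - v i)^2 + (v (i - unitVec d N k) - v i)^2)

lemma sqGrad_nonneg (d N : ℕ) (v : Site d N → ℝ) (i : Site d N) : 0 ≤ sqGrad d N v i :=
  Finset.sum_nonneg fun k _ => add_nonneg (sq_nonneg _) (sq_nonneg _)

lemma sqGrad_ge (d N : ℕ) (v : Site d N → ℝ) (i : Site d N) (k : Fin d) :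
    (v (i + unitVec d N k) - v i)^2 ≤ sqGrad d N v i := by
  have h : (v (i + unitVec d N k) - v i)^2 ≤
      (v (i + unitVec d N k) - v i)^2 + (v (i - unitVec d N k) - v i)^2 :=
    le_add_of_nonneg_right (sq_nonneg _)
  exact h.trans (Finset.single_le_sum (f := fun k =>
    ((v (i + unitVec d N k) - v i)^2 + (v (i - unitVec d N k) - v i)^2))
    (fun k _ => add_nonneg (sq_nonneg _) (sq_nonneg _)) (Finset.mem_univ k))

/-- discrete Bochner identity -/
lemma bochner (d N : ℕ) (v : Site d N → ℝ) (i : Site d N) :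
    2 * v i * discLap d N v i
      = discLap d N (fun j => (v j)^2) i - sqGrad d N v i := by
  simp only [discLap, sqGrad, Finset.mul_sum, ← Finset.sum_sub_distrib]
  exact Finset.sum_congr rfl fun k _ => by ring

/-- laplacian at a maximum is nonpositive -/
lemma discLap_nonpos_at_max (d N : ℕ) (v : Site d N → ℝ) (i : Site d N)
    (h : ∀ j, v j ≤ v i) : discLap d N v i ≤ 0 :=
  Finset.sum_nonpos fun k _ => by
    have h1 := h (i + unitVec d N k); have h2 := h (i - unitVec d N k); linarith

/-- the discrete Laplacian commutes with translation (gradient form) -/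
lemma discLap_grad (d N : ℕ) (v : Site d N → ℝ) (i : Site d N) (k : Fin d) :
    discLap d N v (i + unitVec d N k) - discLap d N v i
      = discLap d N (fun j => v (j + unitVec d N k) - v j) i := by
  simp only [discLap, ← Finset.sum_sub_distrib]
  refine Finset.sum_congr rfl fun k' _ => ?_
  have e1 : i + unitVec d N k + unitVec d N k' = i + unitVec d N k' + unitVec d N k := by
    abel
  have e2 : i + unitVec d N k - unitVec d N k' = i - unitVec d N k' + unitVec d N k := by
    abel
  rw [e1, e2]; ring

/-- Finite-dimensional maximum principle: if at every maximizing index the derivative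
is nonpositive, then the max is nonincreasing. -/
lemma maxPrinciple {ι : Type*} [Fintype ι] [Nonempty ι] (f f' : ℝ → ι → ℝ) (b : ℝ)
    (hd : ∀ i, ∀ t ∈ Set.Icc (0:ℝ) b, HasDerivAt (fun s => f s i) (f' t i) t)
    (hmax : ∀ t ∈ Set.Ico (0:ℝ) b, ∀ i, (∀ j, f t j ≤ f t i) → f' t i ≤ 0) :
    ∀ t ∈ Set.Icc (0:ℝ) b, ∀ i, f t i ≤ Finset.univ.sup' Finset.univ_nonempty (f 0) := by
  set g : ℝ → ℝ := fun t => Finset.univ.sup' Finset.univ_nonempty (f t) with hg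
  have hcont : ContinuousOn g (Set.Icc 0 b) := by
    intro t ht
    have : ContinuousAt g t := by
      apply ContinuousAt.finset_sup'_apply Finset.univ_nonempty
      intro i _
      exact (hd i t ht).continuousAt
    exact this.continuousWithinAt
  have key : ∀ ⦃t⦄, t ∈ Set.Icc (0:ℝ) b → g t ≤ g 0 := by
    have := image_le_of_liminf_slope_right_le_deriv_boundary (f := g) (a := 0) (b := b)
      (B := fun _ => g 0) (B' := fun _ => 0) hcont le_rfl continuousOn_const
      (fun x _ => (hasDerivWithinAt_const x _ (g 0)))
    refine fun t ht => this ?_ ht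
    intro x hx r hr
    -- show ∃ᶠ z in 𝓝[>] x, slope g x z < r
    have hev : ∀ᶠ z in nhdsWithin x (Set.Ioi x), ∀ i, f z i < g x + r * (z - x) := by
      rw [Filter.eventually_all]
      intro i
      by_cases hi : f x i = g x
      · -- active index
        have hact : ∀ j, f x j ≤ f x i := by
          intro j; rw [hi]; exact Finset.le_sup' (f x) (Finset.mem_univ j)
        have hder := hd i x (Set.mem_Icc_of_Ico hx)
        have hsl : Filter.Tendsto (slope (fun s => f s i) x) (nhdsWithin x {x}ᶜ)
            (nhds (f' x i)) := hasDerivAt_iff_tendsto_slope.1 hder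
        have hflt : f' x i < r := lt_of_le_of_lt (hmax x hx i hact) hr
        have := hsl.eventually (eventually_lt_nhds hflt)
        have h2 : ∀ᶠ z in nhdsWithin x (Set.Ioi x), slope (fun s => f s i) x z < r :=
          nhdsWithin_mono x (fun z hz => ne_of_gt hz) this
        filter_upwards [h2, self_mem_nhdsWithin] with z hz hz'
        have hzx : 0 < z - x := sub_pos.2 hz'
        have : (f z i - f x i) / (z - x) < r := by
          rw [div_eq_inv_mul]; simpa [slope_def_field, slope, vsub_eq_sub] using hz
        have := (div_lt_iff₀ hzx).1 this
        calc f z i < f x i + r * (z - x) := by linarith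
          _ = g x + r * (z-x) := by rw [hi]
      · -- inactive index
        have hlt : f x i < g x :=
          lt_of_le_of_ne (Finset.le_sup' (f x) (Finset.mem_univ i)) hi
        have hc : ContinuousAt (fun s => f s i) x := (hd i x (Set.mem_Icc_of_Ico hx)).continuousAt
        have : ∀ᶠ z in nhds x, f z i < g x := hc.eventually_lt continuousAt_const hlt
        have h2 : ∀ᶠ z in nhdsWithin x (Set.Ioi x), f z i < g x :=
          Filter.Eventually.filter_mono nhdsWithin_le_nhds this
        filter_upwards [h2, self_mem_nhdsWithin] with z hz hz'
        have : 0 < r * (z - x) := mul_pos hr (sub_pos.2 hz')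
        linarith
    apply Filter.Eventually.frequently
    filter_upwards [hev, self_mem_nhdsWithin] with z hz hz'
    have hzx : 0 < z - x := sub_pos.2 hz'
    have : g z < g x + r * (z - x) := by
      apply (Finset.sup'_lt_iff Finset.univ_nonempty).2
      intro i _; exact hz i
    rw [slope_def_field]
    rw [div_lt_iff₀ hzx]
    linarith
  intro t ht i
  exact le_trans (Finset.le_sup' (f t) (Finset.mem_univ i)) (key ht)
noncomputable section

def lapLM (d N : ℕ) : ((Site d N) → ℝ) →ₗ[ℝ] ((Site d N) → ℝ) where
  toFun v := fun i => discLap d N v i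
  map_add' u v := by
    funext i
    simp only [discLap, Pi.add_apply, ← Finset.sum_add_distrib]
    exact Finset.sum_congr rfl fun k _ => by ring
  map_smul' c v := by
    funext i
    simp only [discLap, Pi.smul_apply, smul_eq_mul, RingHom.id_apply, Finset.mul_sum]
    exact Finset.sum_congr rfl fun k _ => by ring

variable (d N : ℕ) [NeZero N]

def lapCLM : ((Site d N) → ℝ) →L[ℝ] ((Site d N) → ℝ) :=
  LinearMap.toContinuousLinearMap (lapLM d N)

def AOp (α : ℝ) : ((Site d N) → ℝ) →L[ℝ] ((Site d N) → ℝ) :=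
  (2*α*(N:ℝ)^2) • lapCLM d N

lemma AOp_apply (α : ℝ) (v : Site d N → ℝ) (i : Site d N) :
    AOp d N α v i = 2*α*(N:ℝ)^2 * discLap d N v i := rfl

def heatP (α : ℝ) (r : ℝ) : ((Site d N) → ℝ) →L[ℝ] ((Site d N) → ℝ) :=
  NormedSpace.exp (r • AOp d N α)

lemma heatP_zero (α : ℝ) : heatP d N α 0 = ContinuousLinearMap.id ℝ _ := by
  simp [heatP, NormedSpace.exp_zero]
  rfl

lemma heatP_hasDerivAt (α : ℝ) (r : ℝ) :
    HasDerivAt (fun s => heatP d N α s) (AOp d N α * heatP d N α r) r := by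
  simpa [heatP] using hasDerivAt_exp_smul_const' (𝕂 := ℝ) (AOp d N α) r

lemma heatP_apply_hasDerivAt (α : ℝ) (f : Site d N → ℝ) (r : ℝ) :
    HasDerivAt (fun s => heatP d N α s f) (AOp d N α (heatP d N α r f)) r := by
  have h := heatP_hasDerivAt d N α r
  have := ((ContinuousLinearMap.apply ℝ ((Site d N) → ℝ) f).hasFDerivAt.comp_hasDerivAt r h)
  exact this

lemma heatP_apply_coord_hasDerivAt (α : ℝ) (f : Site d N → ℝ) (i : Site d N) (r : ℝ) :
    HasDerivAt (fun s => heatP d N α s f i) (AOp d N α (heatP d N α r f) i) r := by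
  have h := heatP_apply_hasDerivAt d N α f r
  have := ((ContinuousLinearMap.proj (R := ℝ) (φ := fun _ : Site d N => ℝ) i).hasFDerivAt.comp_hasDerivAt r h)
  exact this

variable (d N : ℕ) [NeZero N]

lemma discLap_comb (a b : ℝ) (p q : Site d N → ℝ) (i : Site d N) :
    discLap d N (fun j => a * p j + b * q j) i
      = a * discLap d N p i + b * discLap d N q i := by
  simp only [discLap, Finset.mul_sum, ← Finset.sum_add_distrib]
  exact Finset.sum_congr rfl fun k _ => by ring

lemma discLap_smul (c : ℝ) (p : Site d N → ℝ) (i : Site d N) :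
    discLap d N (fun j => c * p j) i = c * discLap d N p i := by
  simp only [discLap, Finset.mul_sum]
  exact Finset.sum_congr rfl fun k _ => by ring

lemma grad_contract (α : ℝ) (hα : 0 < α) (f : Site d N → ℝ) (c : ℝ) (k : Fin d)
    (hc : ∀ j, |f (j + unitVec d N k) - f j| ≤ c) :
    ∀ r ≥ (0:ℝ), ∀ i, |heatP d N α r f (i + unitVec d N k) - heatP d N α r f i| ≤ c := by
  intro r hr i
  have hL : (0:ℝ) ≤ 2*α*(N:ℝ)^2 := by positivity
  have main : ∀ σ : ℝ, σ = 1 ∨ σ = -1 →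
      σ * (heatP d N α r f (i + unitVec d N k) - heatP d N α r f i) ≤ c := by
    intro σ hσ
    set fam : ℝ → Site d N → ℝ :=
      fun s j => σ * (heatP d N α s f (j + unitVec d N k) - heatP d N α s f j) with hfam
    set fam' : ℝ → Site d N → ℝ :=
      fun s j => σ * (AOp d N α (heatP d N α s f) (j + unitVec d N k)
        - AOp d N α (heatP d N α s f) j) with hfam'
    have hd : ∀ j, ∀ s ∈ Set.Icc (0:ℝ) r, HasDerivAt (fun s => fam s j) (fam' s j) s := by
      intro j s _
      exact (((heatP_apply_coord_hasDerivAt d N α f (j + unitVec d N k) s).sub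
        (heatP_apply_coord_hasDerivAt d N α f j s)).const_mul σ)
    have hmax : ∀ s ∈ Set.Ico (0:ℝ) r, ∀ j, (∀ j', fam s j' ≤ fam s j) → fam' s j ≤ 0 := by
      intro s _ j hj
      have : fam' s j = 2*α*(N:ℝ)^2 * discLap d N (fun j' => fam s j') j := by
        simp only [hfam', hfam, AOp_apply]
        rw [show (fun j' => σ * (heatP d N α s f (j' + unitVec d N k) - heatP d N α s f j'))
            = (fun j' => σ * ((fun j'' => heatP d N α s f (j'' + unitVec d N k)
              - heatP d N α s f j'') j')) from rfl]
        rw [discLap_smul, ← discLap_grad]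
        ring
      rw [this]
      exact mul_nonpos_of_nonneg_of_nonpos hL (discLap_nonpos_at_max d N _ j hj)
    have key := maxPrinciple fam fam' r hd hmax r (Set.mem_Icc.2 ⟨hr, le_rfl⟩) i
    refine key.trans ?_
    apply Finset.sup'_le
    intro j _
    have h0 : heatP d N α 0 f = f := by rw [heatP_zero]; rfl
    have := hc j
    rcases hσ with h | h <;> rw [hfam] <;> simp only [h0] <;>
      cases' abs_le.1 this with h1 h2 <;> rw [h] <;> linarith
  have h1 := main 1 (Or.inl rfl)
  have h2 := main (-1) (Or.inr rfl)
  rw [abs_le]; constructor <;> linarith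


lemma bern_pt (L A0 : ℝ) (hL : 0 < L) (hA0L : A0 * L = 1) (s : ℝ) (hs : 0 ≤ s)
    (v : Site d N → ℝ) (k : Fin d) (j : Site d N)
    (hj : ∀ j', s * (v (j' + unitVec d N k) - v j')^2 + A0 * (v j')^2
        ≤ s * (v (j + unitVec d N k) - v j)^2 + A0 * (v j)^2) :
    (v (j + unitVec d N k) - v j)^2
      + s * (2 * (v (j + unitVec d N k) - v j)
          * (L * discLap d N v (j + unitVec d N k) - L * discLap d N v j))
      + A0 * (2 * v j * (L * discLap d N v j)) ≤ 0 := by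
  set g : Site d N → ℝ := fun j' => v (j' + unitVec d N k) - v j' with hgdef
  set W : Site d N → ℝ := fun j' => s * (g j')^2 + A0 * (v j')^2 with hWdef
  have egrad : discLap d N v (j + unitVec d N k) - discLap d N v j = discLap d N g j :=
    discLap_grad d N v j k
  have b1 : 2 * g j * discLap d N g j
      = discLap d N (fun j' => (g j')^2) j - sqGrad d N g j := bochner d N g j
  have b2 : 2 * v j * discLap d N v j
      = discLap d N (fun j' => (v j')^2) j - sqGrad d N v j := bochner d N v j
  have hWc : discLap d N W j
      = s * discLap d N (fun j' => (g j')^2) j + A0 * discLap d N (fun j' => (v j')^2) j :=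
    discLap_comb d N s A0 _ _ j
  have hlap : discLap d N W j ≤ 0 := discLap_nonpos_at_max d N W j hj
  have hQv : (g j)^2 ≤ sqGrad d N v j := sqGrad_ge d N v j k
  have hQg : 0 ≤ sqGrad d N g j := sqGrad_nonneg d N g j
  have main : (v (j + unitVec d N k) - v j)^2
      + s * (2 * (v (j + unitVec d N k) - v j)
          * (L * discLap d N v (j + unitVec d N k) - L * discLap d N v j))
      + A0 * (2 * v j * (L * discLap d N v j))
      = (g j)^2 + L * discLap d N W j - s * L * sqGrad d N g j - A0 * L * sqGrad d N v j := by
    linear_combination (s*L)*b1 + (A0*L)*b2 - L*hWc + (2*s*L*(g j))*egrad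
  rw [main]
  have t1 : L * discLap d N W j ≤ 0 := mul_nonpos_of_nonneg_of_nonpos hL.le hlap
  have t2 : 0 ≤ s * L * sqGrad d N g j := by positivity
  have t3 : A0 * L * sqGrad d N v j = sqGrad d N v j := by rw [hA0L, one_mul]
  rw [t3]
  linarith

lemma bernsteinEst (α : ℝ) (hα : 0 < α) (f : Site d N → ℝ) (c : ℝ)
    (hc : ∀ j, |f j| ≤ c) (k : Fin d) :
    ∀ r > (0:ℝ), ∀ i, |heatP d N α r f (i + unitVec d N k) - heatP d N α r f i|
      ≤ c / ((N:ℝ) * Real.sqrt (2*α*r)) := by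
  intro r hr i
  have hN : (0:ℝ) < (N:ℝ) := by
    have := Nat.pos_of_ne_zero (NeZero.ne N); exact_mod_cast this
  have hL : (0:ℝ) < 2*α*(N:ℝ)^2 := by positivity
  have hA0pos : (0:ℝ) < 1/(2*α*(N:ℝ)^2) := by positivity
  set A0 : ℝ := 1/(2*α*(N:ℝ)^2) with hA0
  have hA0L : A0 * (2*α*(N:ℝ)^2) = 1 := by rw [hA0]; field_simp
  set fam : ℝ → Site d N → ℝ := fun s j =>
    s * (heatP d N α s f (j + unitVec d N k) - heatP d N α s f j)^2
      + A0 * (heatP d N α s f j)^2 with hfam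
  set fam' : ℝ → Site d N → ℝ := fun s j =>
    ((heatP d N α s f (j + unitVec d N k) - heatP d N α s f j)^2
      + s * (2 * (heatP d N α s f (j + unitVec d N k) - heatP d N α s f j)
          * (AOp d N α (heatP d N α s f) (j + unitVec d N k)
              - AOp d N α (heatP d N α s f) j)))
    + A0 * (2 * heatP d N α s f j * AOp d N α (heatP d N α s f) j) with hfam'
  have hd : ∀ j, ∀ s ∈ Set.Icc (0:ℝ) r, HasDerivAt (fun s => fam s j) (fam' s j) s := by
    intro j s _
    have hg : HasDerivAt (fun s => heatP d N α s f (j + unitVec d N k) - heatP d N α s f j)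
        (AOp d N α (heatP d N α s f) (j + unitVec d N k)
          - AOp d N α (heatP d N α s f) j) s :=
      (heatP_apply_coord_hasDerivAt d N α f (j + unitVec d N k) s).sub
        (heatP_apply_coord_hasDerivAt d N α f j s)
    have hg2 := hg.pow 2
    have hh2 := (heatP_apply_coord_hasDerivAt d N α f j s).pow 2
    have h1 := (hasDerivAt_id s).mul hg2
    have h2 := hh2.const_mul A0
    have := h1.add h2
    refine this.congr_deriv (Eq.symm ?_)
    simp only [hfam', id_eq, Pi.pow_apply, Pi.mul_apply, Pi.add_apply]
    push_cast
    ring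
  have hmax : ∀ s ∈ Set.Ico (0:ℝ) r, ∀ j, (∀ j', fam s j' ≤ fam s j) → fam' s j ≤ 0 := by
    intro s hs j hj
    have := bern_pt d N (2*α*(N:ℝ)^2) A0 hL hA0L s hs.1 (heatP d N α s f) k j
      (by intro j'; exact hj j')
    simpa only [hfam', AOp_apply] using this
  have key := maxPrinciple fam fam' r hd hmax r (Set.mem_Icc.2 ⟨hr.le, le_rfl⟩) i
  have hc0 : 0 ≤ c := (abs_nonneg _).trans (hc i)
  have hsup : Finset.univ.sup' Finset.univ_nonempty (fam 0) ≤ A0 * c^2 := by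
    apply Finset.sup'_le
    intro j _
    have h0 : heatP d N α 0 f = f := by rw [heatP_zero]; rfl
    simp only [hfam, h0, zero_mul, zero_add]
    have hsq : (f j)^2 ≤ c^2 := by
      have h := sq_abs (f j) ▸ pow_le_pow_left₀ (abs_nonneg (f j)) (hc j) 2
      simpa [sq_abs] using h
    nlinarith
  have hr2 : r * (heatP d N α r f (i + unitVec d N k) - heatP d N α r f i)^2 ≤ A0 * c^2 := by
    have hpos : 0 ≤ A0 * (heatP d N α r f i)^2 := by positivity
    have h := key.trans hsup
    simp only [hfam] at h
    linarith
  set B : ℝ := c / ((N:ℝ) * Real.sqrt (2*α*r)) with hB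
  have hBnn : 0 ≤ B := by
    apply div_nonneg hc0; positivity
  have hBsq : B^2 = A0 * c^2 / r := by
    have h1 : (N:ℝ) ≠ 0 := ne_of_gt hN
    have h2 : α ≠ 0 := ne_of_gt hα
    have h3 : r ≠ 0 := ne_of_gt hr
    rw [hB, div_pow, mul_pow, Real.sq_sqrt (by positivity : (0:ℝ) ≤ 2*α*r), hA0]
    field_simp
    try ring
    try exact Or.inl trivial
  have hsq2 : (heatP d N α r f (i + unitVec d N k) - heatP d N α r f i)^2 ≤ B^2 := by
    rw [hBsq, le_div_iff₀ hr]
    linarith [hr2]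
  calc |heatP d N α r f (i + unitVec d N k) - heatP d N α r f i|
      = Real.sqrt ((heatP d N α r f (i + unitVec d N k) - heatP d N α r f i)^2) :=
        (Real.sqrt_sq_eq_abs _).symm
    _ ≤ Real.sqrt (B^2) := Real.sqrt_le_sqrt hsq2
    _ = B := by rw [Real.sqrt_sq hBnn]

end

noncomputable section
variable (d N : ℕ) [NeZero N]

lemma bprob_eq (u : Site d N → ℝ) (A : Set (Conf d N)) :
    bprob d N u A = ∑ η : Conf d N,
      (∏ i : Site d N, if η i then u i else 1 - u i) * A.indicator (fun _ => (1 : ℝ)) η := by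
  rw [bprob, dif_neg (NeZero.ne N)]

lemma bprob_nonneg (u : Site d N → ℝ) (hu : ∀ i, u i ∈ Set.Icc (0:ℝ) 1)
    (A : Set (Conf d N)) : 0 ≤ bprob d N u A := by
  rw [bprob_eq]
  apply Finset.sum_nonneg
  intro η _
  apply mul_nonneg
  · apply Finset.prod_nonneg
    intro i _
    rcases hu i with ⟨h0, h1⟩
    by_cases h : η i <;> simp [h] <;> linarith
  · by_cases h : η ∈ A <;> simp [Set.indicator, h]

lemma bprob_le_one (u : Site d N → ℝ) (hu : ∀ i, u i ∈ Set.Icc (0:ℝ) 1)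
    (A : Set (Conf d N)) : bprob d N u A ≤ 1 := by
  rw [bprob_eq]
  have step1 : ∑ η : Conf d N,
      (∏ i : Site d N, if η i then u i else 1 - u i) * A.indicator (fun _ => (1 : ℝ)) η
      ≤ ∑ η : Conf d N, (∏ i : Site d N, if η i then u i else 1 - u i) := by
    apply Finset.sum_le_sum
    intro η _
    have hp : 0 ≤ ∏ i : Site d N, if η i then u i else 1 - u i := by
      apply Finset.prod_nonneg
      intro i _
      rcases hu i with ⟨h0, h1⟩
      by_cases h : η i <;> simp [h] <;> linarith
    have hi : A.indicator (fun _ => (1:ℝ)) η ≤ 1 := by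
      by_cases h : η ∈ A <;> simp [Set.indicator, h]
    calc (∏ i : Site d N, if η i then u i else 1 - u i) * A.indicator (fun _ => (1 : ℝ)) η
        ≤ (∏ i : Site d N, if η i then u i else 1 - u i) * 1 := by
          exact mul_le_mul_of_nonneg_left hi hp
      _ = _ := mul_one _
  refine step1.trans ?_
  have h2 : ∑ η : Conf d N, (∏ i : Site d N, if η i then u i else 1 - u i)
      = ∏ i : Site d N, ∑ b : Bool, (if b then u i else 1 - u i) := by
    rw [← Finset.sum_prod_piFinset (Finset.univ : Finset Bool)
      (fun i b => if b then u i else 1 - u i), Fintype.piFinset_univ]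
  rw [h2]
  have h3 : ∀ i : Site d N, ∑ b : Bool, (if b then u i else 1 - u i) = 1 := by
    intro i; simp
  rw [Finset.prod_congr rfl (fun i _ => h3 i), Finset.prod_const_one]
end

noncomputable section
variable (d N : ℕ) [NeZero N]

lemma Gfun_abs_le (V : Finset (Site d N)) (T : ℝ) (x : Site d N → ℝ)
    (hx : ∀ i, x i ∈ Set.Icc (0:ℝ) 1) : |Gfun d N V T x| ≤ 1 := by
  have hcp0 := bprob_nonneg d N x hx
    {η | rho d N V η 0 ≥ 1 - (kappaN V.card T : ℝ) / (V.card : ℝ)}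
  have hcp1 := bprob_le_one d N x hx
    {η | rho d N V η 0 ≥ 1 - (kappaN V.card T : ℝ) / (V.card : ℝ)}
  have hcm0 := bprob_nonneg d N x hx
    {η | rho d N V η 0 ≤ (kappaN V.card T : ℝ) / (V.card : ℝ)}
  have hcm1 := bprob_le_one d N x hx
    {η | rho d N V η 0 ≤ (kappaN V.card T : ℝ) / (V.card : ℝ)}
  rcases hx 0 with ⟨h0, h1⟩
  rw [Gfun, abs_le]
  unfold cplus cminus
  constructor <;> nlinarith

lemma Gi_abs_le (V : Finset (Site d N)) (T : ℝ) (i : Site d N) (x : Site d N → ℝ)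
    (hx : ∀ j, x j ∈ Set.Icc (0:ℝ) 1) : |Gi d N V T i x| ≤ 1 :=
  Gfun_abs_le d N V T _ (fun j => hx (i + j))

lemma continuous_bprob (A : Set (Conf d N)) :
    Continuous fun x : Site d N → ℝ => bprob d N x A := by
  have heq : (fun x : Site d N → ℝ => bprob d N x A) = fun x => ∑ η : Conf d N,
      (∏ i : Site d N, if η i then x i else 1 - x i) * A.indicator (fun _ => (1 : ℝ)) η :=
    funext fun x => bprob_eq d N x A
  rw [heq]
  apply continuous_finset_sum
  intro η _
  apply Continuous.mul _ continuous_const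
  apply continuous_finset_prod
  intro i _
  by_cases h : η i <;> simp only [h, if_true, if_false]
  · exact continuous_apply i
  · exact continuous_const.sub (continuous_apply i)

lemma continuous_Gi (V : Finset (Site d N)) (T : ℝ) (i : Site d N) :
    Continuous fun x : Site d N → ℝ => Gi d N V T i x := by
  have hshift : Continuous fun x : Site d N → ℝ => (fun j => x (i + j)) :=
    continuous_pi fun j => continuous_apply (i + j)
  have hG : Continuous fun x : Site d N → ℝ => Gfun d N V T x := by
    unfold Gfun cplus cminus
    exact ((continuous_const.sub (continuous_apply 0)).mul (continuous_bprob d N _)).sub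
      ((continuous_apply 0).mul (continuous_bprob d N _))
  exact hG.comp hshift

end

noncomputable section
open intervalIntegral MeasureTheory

/-- gradient estimate for the discrete reaction–diffusion system:
if the initial discrete gradient is bounded by `C₀/N`, then at time `t` the discrete
gradient is bounded by `(C₀ + C√t)/N`, with `C` independent of `N` and `t`. -/
theorem stmt2
    (d : ℕ) (hd : 1 ≤ d) (α β T C0 : ℝ)
    (hα : 0 < α) (hβ : 0 < β) (hT : T ∈ Set.Icc (0 : ℝ) 1) (hC0 : 0 < C0) :
    ∃ C > (0 : ℝ), ∀ (N : ℕ), 1 ≤ N →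
      ∀ (V : Finset (Site d N)), (0 : Site d N) ∉ V →
      ∀ (u u' : ℝ → Site d N → ℝ),
      (∀ t, 0 ≤ t → ∀ i, u t i ∈ Set.Icc (0 : ℝ) 1) →
      (∀ i, ∀ t, 0 ≤ t → HasDerivAt (fun s => u s i) (u' t i) t) →
      (∀ t, 0 ≤ t → ∀ i,
        u' t i = 2 * α * (N : ℝ) ^ 2 * discLap d N (u t) i
          + β * (1 - 2 * u t i) + Gi d N V T i (u t)) →
      (∀ i, ∀ k : Fin d, |u 0 (i + unitVec d N k) - u 0 i| ≤ C0 / N) →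
      ∀ t, 0 ≤ t → ∀ i, ∀ k : Fin d,
        |u t (i + unitVec d N k) - u t i| ≤ (C0 + C * Real.sqrt t) / N := by
  have hsq2a : (0:ℝ) < Real.sqrt (2*α) := Real.sqrt_pos.2 (by positivity)
  have hCkey : Real.sqrt (2/α) = 2 / Real.sqrt (2*α) := by
    rw [eq_div_iff (ne_of_gt hsq2a), ← Real.sqrt_mul (by positivity : (0:ℝ) ≤ 2/α)]
    rw [show (2/α) * (2*α) = 4 by field_simp; ring]
    rw [show (4:ℝ) = 2^2 by norm_num, Real.sqrt_sq (by norm_num : (0:ℝ) ≤ 2)]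
  refine ⟨(β + 1) * Real.sqrt (2/α), by positivity, ?_⟩
  intro N hN V hV u u' hrange hderiv hode hinit t ht i k
  haveI : NeZero N := ⟨by omega⟩
  have hNpos : (0:ℝ) < (N:ℝ) := by exact_mod_cast Nat.pos_of_ne_zero (by omega)
  rcases eq_or_lt_of_le ht with h0 | htpos
  · rw [← h0, Real.sqrt_zero, mul_zero, add_zero]
    exact hinit i k
  -- now 0 < t
  set F : ℝ → Site d N → ℝ := fun s => fun j => β * (1 - 2 * u s j) + Gi d N V T j (u s)
    with hFdef
  have hFb : ∀ s, 0 ≤ s → ∀ j, |F s j| ≤ β + 1 := by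
    intro s hs j
    have h1 : |β * (1 - 2 * u s j)| ≤ β := by
      rcases hrange s hs j with ⟨ha, hb⟩
      rw [abs_mul, abs_of_pos hβ]
      have : |1 - 2 * u s j| ≤ 1 := by rw [abs_le]; constructor <;> linarith
      nlinarith
    have h2 : |Gi d N V T j (u s)| ≤ 1 := Gi_abs_le d N V T j (u s) (hrange s hs)
    calc |F s j| ≤ |β * (1 - 2 * u s j)| + |Gi d N V T j (u s)| := abs_add_le _ _
      _ ≤ β + 1 := add_le_add h1 h2
  have huEcont : ContinuousOn (fun s => u s) (Set.Icc (0:ℝ) t) := by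
    apply continuousOn_pi.2
    intro j s hs
    exact ((hderiv j s hs.1).continuousAt).continuousWithinAt
  have hFcont : ContinuousOn (fun s => F s) (Set.Icc (0:ℝ) t) := by
    apply continuousOn_pi.2
    intro j
    apply ContinuousOn.add
    · apply ContinuousOn.mul continuousOn_const
      apply ContinuousOn.sub continuousOn_const
      apply ContinuousOn.mul continuousOn_const
      exact continuousOn_pi.1 huEcont j
    · exact (continuous_Gi d N V T j).comp_continuousOn huEcont
  -- ODE in vector form
  have hodeE : ∀ s ∈ Set.Icc (0:ℝ) t, HasDerivAt (fun σ => u σ) (AOp d N α (u s) + F s) s := by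
    intro s hs
    apply hasDerivAt_pi.2
    intro j
    have h := hderiv j s hs.1
    have heq : u' s j = (AOp d N α (u s) + F s) j := by
      rw [hode s hs.1 j]
      simp only [hFdef, Pi.add_apply, AOp_apply]
      ring
    rwa [heq] at h
  -- Duhamel
  set wE : ℝ → Site d N → ℝ := fun s => u s - heatP d N α s (u 0) with hwEdef
  set φ : ℝ → Site d N → ℝ := fun s => heatP d N α (t - s) (wE s) with hφdef
  have hφ' : ∀ s ∈ Set.Icc (0:ℝ) t, HasDerivAt φ (heatP d N α (t-s) (F s)) s := by
    intro s hs
    have hwE : HasDerivAt wE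
        (AOp d N α (u s) + F s - AOp d N α (heatP d N α s (u 0))) s :=
      (hodeE s hs).sub (heatP_apply_hasDerivAt d N α (u 0) s)
    have hinner : HasDerivAt (fun σ : ℝ => t - σ) (-1) s := (hasDerivAt_id s).const_sub t
    have hBop : HasDerivAt (fun σ : ℝ => heatP d N α (t - σ))
        (-(AOp d N α * heatP d N α (t - s))) s := by
      have hc := HasDerivAt.scomp (x := s) (g₁ := fun r : ℝ => heatP d N α r)
        (h := fun σ : ℝ => t - σ) (heatP_hasDerivAt d N α (t - s)) hinner
      exact hc.congr_deriv (neg_one_smul ℝ _)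
    have happ := hBop.clm_apply hwE
    refine happ.congr_deriv (Eq.symm ?_)
    have hcomm : AOp d N α * heatP d N α (t-s) = heatP d N α (t-s) * AOp d N α := by
      have hc : Commute (AOp d N α) ((t-s) • AOp d N α) :=
        (Commute.refl (AOp d N α)).smul_right (t-s)
      exact hc.exp_right.eq
    have hAval : ∀ y, AOp d N α (heatP d N α (t-s) y) = heatP d N α (t-s) (AOp d N α y) := by
      intro y
      have := congrArg (fun (M : ((Site d N) → ℝ) →L[ℝ] ((Site d N) → ℝ)) => M y) hcomm
      simpa [ContinuousLinearMap.mul_apply] using this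
    have hsub : AOp d N α (u s) - AOp d N α (heatP d N α s (u 0)) = AOp d N α (wE s) := by
      rw [hwEdef, map_sub]
    calc heatP d N α (t-s) (F s)
        = -(heatP d N α (t-s) (AOp d N α (wE s)))
          + heatP d N α (t-s) (AOp d N α (wE s) + F s) := by
          rw [map_add]; abel
      _ = (-(AOp d N α * heatP d N α (t - s))) (wE s)
          + heatP d N α (t-s) (AOp d N α (u s) + F s - AOp d N α (heatP d N α s (u 0))) := by
          congr 1
          · rw [ContinuousLinearMap.neg_apply, ContinuousLinearMap.mul_apply, hAval]
          · congr 1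
            rw [← hsub]; abel
  have hPcont : Continuous (fun s : ℝ => heatP d N α (t - s)) := by
    have h1 : Continuous (fun s : ℝ => (t - s) • AOp d N α) :=
      (continuous_const.sub continuous_id).smul continuous_const
    exact continuous_iff_continuousAt.2 fun s =>
      (heatP_hasDerivAt d N α (t - s)).continuousAt.comp (f := fun σ : ℝ => t - σ)
        (continuous_const.sub continuous_id).continuousAt
  have hcont_integrand : ContinuousOn (fun s => heatP d N α (t-s) (F s)) (Set.Icc (0:ℝ) t) :=
    hPcont.continuousOn.clm_apply hFcont
  have hInt : IntervalIntegrable (fun s => heatP d N α (t-s) (F s)) volume 0 t := by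
    apply ContinuousOn.intervalIntegrable
    rwa [Set.uIcc_of_le ht]
  have hFTC : (∫ s in (0:ℝ)..t, heatP d N α (t-s) (F s)) = φ t - φ 0 := by
    apply intervalIntegral.integral_eq_sub_of_hasDerivAt
    · intro s hs
      rw [Set.uIcc_of_le ht] at hs
      exact hφ' s hs
    · exact hInt
  have hφt : φ t = wE t := by
    rw [hφdef]
    simp only [sub_self, heatP_zero]
    rfl
  have hφ0 : φ 0 = 0 := by
    have hw0 : wE 0 = 0 := by
      rw [hwEdef]
      simp only [heatP_zero]
      change u 0 - u 0 = 0
      simp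
    rw [hφdef]
    simp only [hw0, map_zero]
  have hDuh : wE t = ∫ s in (0:ℝ)..t, heatP d N α (t-s) (F s) := by
    rw [hFTC, hφt, hφ0, sub_zero]
  -- coordinate extraction
  set Lk : ((Site d N) → ℝ) →L[ℝ] ℝ :=
    ContinuousLinearMap.proj (R := ℝ) (φ := fun _ : Site d N => ℝ) (i + unitVec d N k)
      - ContinuousLinearMap.proj (R := ℝ) (φ := fun _ : Site d N => ℝ) i with hLkdef
  have hLk : ∀ x : Site d N → ℝ, Lk x = x (i + unitVec d N k) - x i := fun x => rfl
  have hswap : Lk (wE t) = ∫ s in (0:ℝ)..t, Lk (heatP d N α (t-s) (F s)) := by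
    rw [hDuh, ← ContinuousLinearMap.intervalIntegral_comp_comm Lk hInt]
  -- the singular bound
  set Cg : ℝ := (β+1) / ((N:ℝ) * Real.sqrt (2*α)) with hCgdef
  have hCgpos : 0 < Cg := by positivity
  set g : ℝ → ℝ := fun s => Cg * (t - s) ^ (-(1/2) : ℝ) with hgdef
  have hgInt : IntervalIntegrable g volume 0 t := by
    have h1 : IntervalIntegrable (fun x : ℝ => x ^ (-(1/2) : ℝ)) volume 0 t :=
      intervalIntegrable_rpow' (by norm_num)
    have h2 := (h1.comp_sub_left t)
    simp only [sub_zero, sub_self] at h2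
    exact (h2.const_mul Cg).symm
  have hae : ∀ᵐ s ∂(volume.restrict (Set.uIoc (0:ℝ) t)),
      ‖Lk (heatP d N α (t-s) (F s))‖ ≤ g s := by
    have h1 : ∀ᵐ s ∂(volume.restrict (Set.uIoc (0:ℝ) t)), s ∈ Set.uIoc (0:ℝ) t :=
      ae_restrict_mem measurableSet_uIoc
    have h2 : ∀ᵐ s ∂(volume.restrict (Set.uIoc (0:ℝ) t)), s ≠ t := by
      apply ae_restrict_of_ae
      rw [MeasureTheory.ae_iff]
      have : {s : ℝ | ¬ s ≠ t} = {t} := by ext x; simp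
      rw [this]
      exact Real.volume_singleton
    filter_upwards [h1, h2] with s hs hst
    rw [Set.uIoc_of_le ht] at hs
    have hs0 : 0 < s := hs.1
    have hst' : s < t := lt_of_le_of_ne hs.2 hst
    have hts : 0 < t - s := by linarith
    have hb := bernsteinEst d N α hα (F s) (β+1) (hFb s hs0.le) k (t - s) hts i
    rw [hLk, Real.norm_eq_abs]
    refine hb.trans (le_of_eq ?_)
    rw [hgdef, hCgdef]
    have e1 : Real.sqrt (2*α*(t-s)) = Real.sqrt (2*α) * Real.sqrt (t-s) :=
      Real.sqrt_mul (by positivity) _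
    have e2 : (t - s) ^ (-(1/2) : ℝ) = (Real.sqrt (t-s))⁻¹ := by
      rw [Real.rpow_neg hts.le, ← Real.sqrt_eq_rpow]
    show (β + 1) / ((N:ℝ) * Real.sqrt (2*α*(t-s)))
      = (β + 1) / ((N:ℝ) * Real.sqrt (2*α)) * (t - s) ^ (-(1/2) : ℝ)
    rw [e1, e2]
    have hsts : 0 < Real.sqrt (t - s) := Real.sqrt_pos.2 hts
    field_simp
    try ring
    try exact Or.inl trivial
  have hmain : ‖∫ s in (0:ℝ)..t, Lk (heatP d N α (t-s) (F s))‖ ≤ |∫ s in (0:ℝ)..t, g s| :=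
    intervalIntegral.norm_integral_le_abs_of_norm_le hae hgInt
  -- compute the integral of g
  have hgval : (∫ s in (0:ℝ)..t, g s) = Cg * (2 * Real.sqrt t) := by
    rw [hgdef]
    rw [intervalIntegral.integral_const_mul]
    have h1 : (∫ s in (0:ℝ)..t, (t - s) ^ (-(1/2) : ℝ)) = ∫ x in (0:ℝ)..t, x ^ (-(1/2) : ℝ) := by
      have := intervalIntegral.integral_comp_sub_left (a := 0) (b := t)
        (fun x : ℝ => x ^ (-(1/2) : ℝ)) t
      simpa using this
    rw [h1, integral_rpow (Or.inl (by norm_num))]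
    rw [show ((-(1/2) : ℝ) + 1) = 1/2 by norm_num]
    rw [Real.zero_rpow (by norm_num : (1/2:ℝ) ≠ 0), ← Real.sqrt_eq_rpow]
    ring
  have hwvk : |wE t (i + unitVec d N k) - wE t i| ≤ Cg * (2 * Real.sqrt t) := by
    have heq : wE t (i + unitVec d N k) - wE t i = Lk (wE t) := (hLk _).symm
    rw [heq, ← Real.norm_eq_abs, hswap]
    refine hmain.trans (le_of_eq ?_)
    rw [hgval]
    apply abs_of_nonneg
    positivity
  have hv := grad_contract d N α hα (u 0) (C0/(N:ℝ)) k (fun j => hinit j k) t ht i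
  have hsplit : u t (i + unitVec d N k) - u t i
      = (heatP d N α t (u 0) (i + unitVec d N k) - heatP d N α t (u 0) i)
        + (wE t (i + unitVec d N k) - wE t i) := by
    simp only [hwEdef, Pi.sub_apply]
    ring
  calc |u t (i + unitVec d N k) - u t i|
      ≤ |heatP d N α t (u 0) (i + unitVec d N k) - heatP d N α t (u 0) i|
        + |wE t (i + unitVec d N k) - wE t i| := by
        rw [hsplit]; exact abs_add_le _ _
    _ ≤ C0/(N:ℝ) + Cg * (2 * Real.sqrt t) := add_le_add hv hwvk
    _ = (C0 + (β + 1) * Real.sqrt (2/α) * Real.sqrt t) / N := by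
        rw [hCkey, hCgdef]
        field_simp
        try ring
        try exact Or.inl trivial

end
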